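/- For every positive integer k and every finite graph G=(V,E), there exists an edge decomposition of G into subgraphs G₁,…,G_k such that for every vertex v ∈ V and every i ∈ [k], d_G(v)/k − 2 ≤ d_{G_i}(v) ≤ d_G(v)/k + 2. -/

import Mathlib

set_option linter.unusedSectionVars false


open SimpleGraph

/-- The closed neighbourhood of an edge `e`: all edges of `G` sharing a vertex with `e`. -/
def ECN {V : Type*} (G : SimpleGraph V) (e : Sym2 V) : Set (Sym2 V) :=
  {f | f ∈ G.edgeSet ∧ ∃ w, w ∈ f ∧ w ∈ e}

/-- The open neighbourhood of an edge `e`. -/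
def EON {V : Type*} (G : SimpleGraph V) (e : Sym2 V) : Set (Sym2 V) :=
  ECN G e \ {e}

/-- `c` is a closed conflict-free edge colouring of `G` with `k` colours. -/
def ClosedCF {V : Type*} (G : SimpleGraph V) (c : Sym2 V → ℕ) (k : ℕ) : Prop :=
  (∀ e ∈ G.edgeSet, c e < k) ∧
  ∀ e ∈ G.edgeSet, ∃ α, ∃! f, f ∈ ECN G e ∧ c f = α

/-- `c` is an open conflict-free edge colouring of `G` with `k` colours. -/
def OpenCF {V : Type*} (G : SimpleGraph V) (c : Sym2 V → ℕ) (k : ℕ) : Prop :=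
  (∀ e ∈ G.edgeSet, c e < k) ∧
  ∀ e ∈ G.edgeSet, (EON G e).Nonempty → ∃ α, ∃! f, f ∈ EON G e ∧ c f = α

/-- `c` is a conflict-free edge colouring of `G` with `k` colours:
every non-isolated edge `e` has an edge `e'` in its open neighbourhood whose
colour appears on no other edge of the closed neighbourhood of `e`. -/
def ConflictFree {V : Type*} (G : SimpleGraph V) (c : Sym2 V → ℕ) (k : ℕ) : Prop :=
  (∀ e ∈ G.edgeSet, c e < k) ∧
  ∀ e ∈ G.edgeSet, (EON G e).Nonempty →
    ∃ e' ∈ EON G e, ∀ f ∈ ECN G e, c f = c e' → f = e'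

/-- A partial edge colouring of `G` with `k` colours. -/
def PartialColouring {V : Type*} (G : SimpleGraph V) (c : Sym2 V → Option ℕ) (k : ℕ) : Prop :=
  ∀ e α, c e = some α → e ∈ G.edgeSet ∧ α < k

/-- An edge `e` is satisfied by the partial colouring `c`. -/
def SatisfiedP {V : Type*} (G : SimpleGraph V) (c : Sym2 V → Option ℕ) (e : Sym2 V) : Prop :=
  ∃ e' ∈ EON G e, ∃ α, c e' = some α ∧ ∀ f ∈ ECN G e, c f = some α → f = e'

/-- Vertex `v` is incident with a uniquely coloured edge under partial colouring `c`. -/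
def UniqueAt {V : Type*} (G : SimpleGraph V) (c : Sym2 V → Option ℕ) (v : V) : Prop :=
  ∃ e ∈ G.incidenceSet v, ∃ α, c e = some α ∧
    ∀ f ∈ G.incidenceSet v, c f = some α → f = e

/-- `G` is `k`-degenerate: there is a vertex ordering in which every vertex
has at most `k` earlier neighbours. -/
def IsDegenerate {V : Type*} (G : SimpleGraph V) (k : ℕ) : Prop :=
  ∃ f : V ↪ ℕ, ∀ v, {u ∈ G.neighborSet v | f u < f v}.ncard ≤ k

/-- The open conflict-free chromatic index. -/
noncomputable def ocfIndex {V : Type*} (G : SimpleGraph V) : ℕ :=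
  sInf {k | ∃ c, OpenCF G c k}

/-- The closed conflict-free chromatic index. -/
noncomputable def ccfIndex {V : Type*} (G : SimpleGraph V) : ℕ :=
  sInf {k | ∃ c, ClosedCF G c k}

/-- The conflict-free chromatic index. -/
noncomputable def cfIndex {V : Type*} (G : SimpleGraph V) : ℕ :=
  sInf {k | ∃ c, ConflictFree G c k}


section Aux

open Finset
open scoped Classical

variable {V : Type*} [Fintype V]

open Classical in
/-- The finset of edges of `H` incident to `u`. -/
noncomputable def incF (H : SimpleGraph V) (u : V) : Finset (Sym2 V) :=
  (H.incidenceSet u).toFinset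

lemma mem_incF {H : SimpleGraph V} {u : V} {e : Sym2 V} :
    e ∈ incF H u ↔ e ∈ H.edgeSet ∧ u ∈ e := by
  classical
  unfold incF
  exact Set.mem_toFinset

/-- Signed imbalance of a 2-colouring at a vertex. -/
noncomputable def Sgn (H : SimpleGraph V) (χ : Sym2 V → Bool) (u : V) : ℤ :=
  ∑ e ∈ incF H u, (if χ e then 1 else -1)

lemma Sgn_neg (H : SimpleGraph V) (χ : Sym2 V → Bool) (u : V) :
    Sgn H (fun e => !χ e) u = - Sgn H χ u := by
  unfold Sgn
  rw [← Finset.sum_neg_distrib]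
  refine Finset.sum_congr rfl fun e _ => ?_
  cases h : χ e <;> simp [h]

lemma abs_Sgn_le (H : SimpleGraph V) (χ : Sym2 V → Bool) (u : V) :
    |Sgn H χ u| ≤ (incF H u).card := by
  unfold Sgn
  refine le_trans (Finset.abs_sum_le_sum_abs _ _) (le_of_eq ?_)
  have h : ∀ e ∈ incF H u, |if χ e then (1:ℤ) else -1| = 1 := by
    intro e _; cases h : χ e <;> simp [h]
  rw [Finset.sum_congr rfl h, Finset.sum_const, nsmul_eq_mul, mul_one]

lemma even_Sgn_add_card (H : SimpleGraph V) (χ : Sym2 V → Bool) (u : V) :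
    Even (Sgn H χ u + (incF H u).card) := by
  unfold Sgn
  rw [Finset.card_eq_sum_ones (incF H u)]
  push_cast
  rw [← Finset.sum_add_distrib]
  rw [even_iff_two_dvd]
  refine Finset.dvd_sum fun e _ => ?_
  cases h : χ e <;> simp [h]

lemma Sgn_congr {H H' : SimpleGraph V} {χ χ' : Sym2 V → Bool} {u : V}
    (h : incF H u = incF H' u) (h2 : ∀ e ∈ incF H' u, χ e = χ' e) :
    Sgn H χ u = Sgn H' χ' u := by
  unfold Sgn
  rw [h]
  exact Finset.sum_congr rfl fun e he => by rw [h2 e he]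

lemma reach_split {H : SimpleGraph V} (x y : V) {a b : V} (p : H.Walk a b) :
    (H.deleteEdges {s(x,y)}).Reachable a b ∨
      ((H.deleteEdges {s(x,y)}).Reachable a x ∨ (H.deleteEdges {s(x,y)}).Reachable a y) ∧
      ((H.deleteEdges {s(x,y)}).Reachable b x ∨ (H.deleteEdges {s(x,y)}).Reachable b y) := by
  induction p with
  | nil => exact Or.inl (Reachable.refl _)
  | @cons a c b h p ih =>
    by_cases he : s(a, c) = s(x, y)
    · rw [Sym2.eq_iff] at he
      have ha : (H.deleteEdges {s(x,y)}).Reachable a x ∨ (H.deleteEdges {s(x,y)}).Reachable a y := by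
        rcases he with ⟨h1, _⟩ | ⟨h1, _⟩
        · exact Or.inl (by rw [h1])
        · exact Or.inr (by rw [h1])
      have hc : (H.deleteEdges {s(x,y)}).Reachable c x ∨ (H.deleteEdges {s(x,y)}).Reachable c y := by
        rcases he with ⟨_, h2⟩ | ⟨_, h2⟩
        · exact Or.inr (by rw [h2])
        · exact Or.inl (by rw [h2])
      have hb : (H.deleteEdges {s(x,y)}).Reachable b x ∨ (H.deleteEdges {s(x,y)}).Reachable b y := by
        rcases ih with hcb | ⟨_, hb⟩
        · exact hc.imp (fun r => hcb.symm.trans r) (fun r => hcb.symm.trans r)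
        · exact hb
      exact Or.inr ⟨ha, hb⟩
    · have h' : (H.deleteEdges {s(x,y)}).Adj a c := by
        rw [SimpleGraph.deleteEdges_adj]
        exact ⟨h, by simpa using he⟩
      rcases ih with hcb | ⟨hcside, hbside⟩
      · exact Or.inl (h'.reachable.trans hcb)
      · exact Or.inr ⟨hcside.imp (fun r => h'.reachable.trans r) (fun r => h'.reachable.trans r),
          hbside⟩

lemma reach_of_mem_support {H : SimpleGraph V} {a b x : V} (p : H.Walk a b)
    (hx : x ∈ p.support) : H.Reachable x b := by
  classical
  exact ⟨p.dropUntil x hx⟩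

lemma mem_support_of_mem_edges' {H : SimpleGraph V} {a b x : V} (p : H.Walk a b) {e : Sym2 V}
    (he : e ∈ p.edges) (hx : x ∈ e) : x ∈ p.support := by
  induction e with
  | _ t u =>
    rw [Sym2.mem_iff] at hx
    rcases hx with rfl | rfl
    · exact p.fst_mem_support_of_mem_edges he
    · exact p.snd_mem_support_of_mem_edges he

/-- The set of edges of the connected component of `v` in `H`. -/
def compEdges (H : SimpleGraph V) (v : V) : Set (Sym2 V) :=
  {e | e ∈ H.edgeSet ∧ ∀ x ∈ e, H.Reachable x v}

lemma edgeSet_comp (H : SimpleGraph V) (v : V) :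
    (SimpleGraph.fromEdgeSet (compEdges H v)).edgeSet = compEdges H v := by
  rw [SimpleGraph.edgeSet_fromEdgeSet]
  ext e
  simp only [Set.mem_diff, Set.mem_setOf_eq, and_iff_left_iff_imp]
  exact fun he => H.not_isDiag_of_mem_edgeSet he.1

lemma incF_comp_of_reach {H : SimpleGraph V} {v u : V} (h : H.Reachable u v) :
    incF (SimpleGraph.fromEdgeSet (compEdges H v)) u = incF H u := by
  ext e
  simp only [mem_incF, edgeSet_comp]
  constructor
  · rintro ⟨⟨he, _⟩, hu⟩; exact ⟨he, hu⟩
  · rintro ⟨he, hu⟩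
    refine ⟨⟨he, ?_⟩, hu⟩
    induction e with
    | _ p q =>
      have hadj : H.Adj p q := (H.mem_edgeSet).mp he
      rw [Sym2.mem_iff] at hu
      intro z hz
      rw [Sym2.mem_iff] at hz
      rcases hu with rfl | rfl <;> rcases hz with rfl | rfl
      · exact h
      · exact hadj.symm.reachable.trans h
      · exact hadj.reachable.trans h
      · exact h

lemma incF_comp_of_not_reach {H : SimpleGraph V} {v u : V} (h : ¬ H.Reachable u v) :
    incF (SimpleGraph.fromEdgeSet (compEdges H v)) u = ∅ := by
  ext e
  simp only [mem_incF, edgeSet_comp, Finset.notMem_empty, iff_false]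
  rintro ⟨⟨_, hr⟩, hu⟩
  exact h (hr u hu)

lemma walk_edges_mem_comp {H : SimpleGraph V} {v a : V} (p : H.Walk a v) {e : Sym2 V}
    (he : e ∈ p.edges) : e ∈ compEdges H v :=
  ⟨p.edges_subset_edgeSet he, fun x hx => reach_of_mem_support p (mem_support_of_mem_edges' p he hx)⟩

lemma comp_reach {H : SimpleGraph V} {v u : V} (h : H.Reachable u v) :
    (SimpleGraph.fromEdgeSet (compEdges H v)).Reachable u v := by
  obtain ⟨p⟩ := h
  exact ⟨p.transfer _ (fun e he => (edgeSet_comp H v).symm ▸ walk_edges_mem_comp p he)⟩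

lemma comp_conn {H : SimpleGraph V} {v : V} (a b : V)
    (ha : (incF (SimpleGraph.fromEdgeSet (compEdges H v)) a).Nonempty)
    (hb : (incF (SimpleGraph.fromEdgeSet (compEdges H v)) b).Nonempty) :
    (SimpleGraph.fromEdgeSet (compEdges H v)).Reachable a b := by
  obtain ⟨e, he⟩ := ha
  obtain ⟨f, hf⟩ := hb
  rw [mem_incF, edgeSet_comp] at he hf
  exact (comp_reach (he.1.2 a he.2)).trans (comp_reach (hf.1.2 b hf.2)).symm

lemma comp_hv {H : SimpleGraph V} {v : V}
    (hne : (SimpleGraph.fromEdgeSet (compEdges H v)).edgeSet.Nonempty) :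
    (incF (SimpleGraph.fromEdgeSet (compEdges H v)) v).Nonempty := by
  rw [edgeSet_comp] at hne
  obtain ⟨e, he⟩ := hne
  induction e with
  | _ p q =>
    have hp : H.Reachable p v := he.2 p (Sym2.mem_mk_left p q)
    obtain ⟨w⟩ := hp
    cases hw : w.reverse with
    | nil =>
      exact ⟨s(v, q), mem_incF.mpr ⟨(edgeSet_comp H v).symm ▸ he, Sym2.mem_mk_left v q⟩⟩
    | @cons _ y _ h q =>
      refine ⟨s(v, y), mem_incF.mpr ⟨(edgeSet_comp H v).symm ▸ ?_, Sym2.mem_mk_left v y⟩⟩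
      refine ⟨(H.mem_edgeSet).mpr h, fun z hz => ?_⟩
      rw [Sym2.mem_iff] at hz
      rcases hz with rfl | rfl
      · exact Reachable.refl _
      · exact (h.symm).reachable

lemma incF_deleteEdge (H : SimpleGraph V) (d : Sym2 V) (u : V) :
    incF (H.deleteEdges {d}) u = (incF H u).erase d := by
  classical
  ext e
  simp only [mem_incF, SimpleGraph.edgeSet_deleteEdges, Set.mem_diff, Set.mem_singleton_iff,
    Finset.mem_erase]
  tauto

lemma Sgn_deleteEdge {H : SimpleGraph V} {x y : V} (hxy : s(x,y) ∈ H.edgeSet)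
    (χ : Sym2 V → Bool) (u : V) :
    Sgn H χ u = Sgn (H.deleteEdges {s(x,y)}) χ u
      + (if u = x ∨ u = y then (if χ s(x,y) then 1 else -1) else 0) := by
  classical
  unfold Sgn
  rw [incF_deleteEdge]
  by_cases hu : u = x ∨ u = y
  · have hm : s(x,y) ∈ incF H u := by
      refine mem_incF.mpr ⟨hxy, ?_⟩
      rcases hu with rfl | rfl
      · exact Sym2.mem_mk_left _ _
      · exact Sym2.mem_mk_right _ _
    rw [if_pos hu, ← Finset.add_sum_erase _ _ hm]
    ring
  · have hm : s(x,y) ∉ incF H u := by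
      rw [mem_incF]
      rintro ⟨_, hmem⟩
      rw [Sym2.mem_iff] at hmem
      exact hu hmem
    rw [if_neg hu, Finset.erase_eq_of_notMem hm, add_zero]

lemma Sgn_split {H H1 H2 : SimpleGraph V} {u : V}
    (h : incF H u = incF H1 u ∪ incF H2 u) (hd : Disjoint (incF H1 u) (incF H2 u))
    (χ : Sym2 V → Bool) : Sgn H χ u = Sgn H1 χ u + Sgn H2 χ u := by
  unfold Sgn
  rw [h, Finset.sum_union hd]

lemma Sgn_of_incF_empty {H : SimpleGraph V} {u : V} (h : incF H u = ∅) (χ : Sym2 V → Bool) :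
    Sgn H χ u = 0 := by
  unfold Sgn
  rw [h, Finset.sum_empty]

lemma incF_empty_of_edgeSet_empty {H : SimpleGraph V} (h : H.edgeSet = ∅) (u : V) :
    incF H u = ∅ := by
  ext e
  simp [mem_incF, h]

lemma key_empty {H : SimpleGraph V} (hE : H.edgeSet = ∅) (v : V) :
    ∃ χ : Sym2 V → Bool, (∀ u, u ≠ v → |Sgn H χ u| ≤ 1) ∧ |Sgn H χ v| ≤ 2 := by
  refine ⟨fun _ => true, fun u _ => ?_, ?_⟩ <;>
    simp [Sgn_of_incF_empty (incF_empty_of_edgeSet_empty hE _)]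

lemma key : ∀ (n : ℕ) (H : SimpleGraph V), H.edgeSet.ncard ≤ n →
    (∀ a b : V, (incF H a).Nonempty → (incF H b).Nonempty → H.Reachable a b) →
    ∀ v : V, (H.edgeSet.Nonempty → (incF H v).Nonempty) →
    ∃ χ : Sym2 V → Bool, (∀ u, u ≠ v → |Sgn H χ u| ≤ 1) ∧ |Sgn H χ v| ≤ 2 := by
  intro n
  induction n with
  | zero =>
    intro H hcard _ v _
    refine key_empty ((Set.ncard_eq_zero (Set.toFinite _)).mp (Nat.le_zero.mp hcard)) v
  | succ n ih =>
    intro H hcard hconn v hv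
    by_cases hE : H.edgeSet.Nonempty
    swap
    · exact key_empty (Set.not_nonempty_iff_eq_empty.mp hE) v
    obtain ⟨e₀, he₀⟩ := hv hE
    rw [mem_incF] at he₀
    obtain ⟨w, rfl⟩ := Sym2.mem_iff_exists.mp he₀.2
    have hadj : H.Adj v w := (H.mem_edgeSet).mp he₀.1
    have hvw : v ≠ w := hadj.ne
    set H' := H.deleteEdges {s(v,w)} with hH'
    have hcard' : H'.edgeSet.ncard ≤ n := by
      have h1 : H'.edgeSet = H.edgeSet \ {s(v,w)} := SimpleGraph.edgeSet_deleteEdges _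
      have h2 : (H.edgeSet \ {s(v,w)}).ncard = H.edgeSet.ncard - 1 :=
        Set.ncard_diff_singleton_of_mem he₀.1
      have h3 : 1 ≤ H.edgeSet.ncard := by
        rw [Nat.one_le_iff_ne_zero]
        intro h0
        rw [Set.ncard_eq_zero (Set.toFinite _)] at h0
        exact hE.ne_empty h0
      rw [h1, h2]; omega
    have hincF' : ∀ u, incF H' u = (incF H u).erase s(v,w) := fun u => incF_deleteEdge H _ u
    by_cases hr : H'.Reachable v w
    · -- Case 1 : removing the edge keeps v and w connected
      have hconn' : ∀ a b, (incF H' a).Nonempty → (incF H' b).Nonempty → H'.Reachable a b := by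
        intro a b ha hb
        have haH : (incF H a).Nonempty := by
          obtain ⟨e, he⟩ := ha; rw [hincF'] at he; exact ⟨e, Finset.mem_of_mem_erase he⟩
        have hbH : (incF H b).Nonempty := by
          obtain ⟨e, he⟩ := hb; rw [hincF'] at he; exact ⟨e, Finset.mem_of_mem_erase he⟩
        obtain ⟨p⟩ := hconn a b haH hbH
        rcases reach_split v w p with h | ⟨hA, hB⟩
        · exact h
        · have ha' : H'.Reachable a v := by
            rcases hA with h | h; exact h; exact h.trans hr.symm
          have hb' : H'.Reachable b v := by
            rcases hB with h | h; exact h; exact h.trans hr.symm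
          exact ha'.trans hb'.symm
      have hv' : H'.edgeSet.Nonempty → (incF H' w).Nonempty := by
        intro _
        obtain ⟨p⟩ := hr.symm
        cases p with
        | nil => exact absurd rfl hvw
        | @cons _ y _ h q =>
          exact ⟨s(w,y), mem_incF.mpr ⟨(H'.mem_edgeSet).mpr h, Sym2.mem_mk_left _ _⟩⟩
      obtain ⟨χ', h1, h2⟩ := ih H' hcard' hconn' w hv'
      set b₀ : Bool := decide (Sgn H' χ' w ≤ 0) with hb₀
      set σ : ℤ := if Sgn H' χ' w ≤ 0 then 1 else -1 with hσ
      set χ : Sym2 V → Bool := fun e => if e = s(v,w) then b₀ else χ' e with hχ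
      have hS : ∀ u, Sgn H χ u = Sgn H' χ' u + (if u = v ∨ u = w then σ else 0) := by
        intro u
        rw [Sgn_deleteEdge he₀.1 χ u]
        congr 1
        · refine Sgn_congr rfl fun e he => ?_
          rw [hincF'] at he
          simp only [hχ, if_neg (Finset.ne_of_mem_erase he)]
        · congr 1
          have : χ s(v,w) = b₀ := by simp [hχ]
          rw [this, hσ, hb₀]
          by_cases h : Sgn H' χ' w ≤ 0 <;> simp [h]
      refine ⟨χ, ?_, ?_⟩
      · intro u hu
        rw [hS u]
        by_cases huw : u = w
        · subst huw
          rw [if_pos (Or.inr rfl)]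
          have := h2
          rw [abs_le] at this ⊢
          rw [hσ]
          by_cases h : Sgn H' χ' u ≤ 0 <;> simp [h] <;> omega
        · rw [if_neg (by tauto), add_zero]
          exact h1 u huw
      · rw [hS v, if_pos (Or.inl rfl)]
        have := h1 v hvw
        rw [abs_le] at this ⊢
        rw [hσ]
        by_cases h : Sgn H' χ' w ≤ 0 <;> simp [h] <;> omega
    · -- Case 2 : the edge was a bridge
      set F1 := compEdges H' v with hF1
      set F2 := compEdges H' w with hF2
      set H1 := SimpleGraph.fromEdgeSet F1 with hH1
      set H2 := SimpleGraph.fromEdgeSet F2 with hH2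
      have hE1 : H1.edgeSet = F1 := by rw [hH1, hF1]; exact edgeSet_comp H' v
      have hE2 : H2.edgeSet = F2 := by rw [hH2, hF2]; exact edgeSet_comp H' w
      have hmemF1 : ∀ e, e ∈ F1 ↔ e ∈ H'.edgeSet ∧ ∀ x ∈ e, H'.Reachable x v := by
        intro e; rw [hF1]; rfl
      have hmemF2 : ∀ e, e ∈ F2 ↔ e ∈ H'.edgeSet ∧ ∀ x ∈ e, H'.Reachable x w := by
        intro e; rw [hF2]; rfl
      have hvinc : (incF H v).Nonempty := ⟨s(v,w), mem_incF.mpr ⟨he₀.1, Sym2.mem_mk_left _ _⟩⟩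
      have hreach2 : ∀ a : V, (incF H a).Nonempty → H'.Reachable a v ∨ H'.Reachable a w := by
        intro a ha
        obtain ⟨p⟩ := hconn a v ha hvinc
        rcases reach_split v w p with h | ⟨hA, _⟩
        · exact Or.inl h
        · exact hA
      have hsplit : ∀ e ∈ H'.edgeSet, e ∈ F1 ∨ e ∈ F2 := by
        intro e he
        induction e with
        | _ p q =>
          have heH : s(p,q) ∈ H.edgeSet := by
            rw [hH', SimpleGraph.edgeSet_deleteEdges] at he; exact he.1
          have he' : s(p,q) ∈ H'.edgeSet := by rw [hH', SimpleGraph.edgeSet_deleteEdges] at he ⊢; exact he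
          have hadjpq : H'.Adj p q := (H'.mem_edgeSet).mp he'
          have hp := hreach2 p ⟨s(p,q), mem_incF.mpr ⟨heH, Sym2.mem_mk_left _ _⟩⟩
          rcases hp with h | h
          · left
            rw [hmemF1]
            refine ⟨he', fun z hz => ?_⟩
            rw [Sym2.mem_iff] at hz
            rcases hz with rfl | rfl
            · exact h
            · exact hadjpq.symm.reachable.trans h
          · right
            rw [hmemF2]
            refine ⟨he', fun z hz => ?_⟩
            rw [Sym2.mem_iff] at hz
            rcases hz with rfl | rfl
            · exact h
            · exact hadjpq.symm.reachable.trans h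
      have hF12 : ∀ e, e ∈ F1 → e ∈ F2 → False := by
        intro e h1 h2
        rw [hmemF1] at h1
        rw [hmemF2] at h2
        induction e with
        | _ p q =>
          exact hr ((h1.2 p (Sym2.mem_mk_left _ _)).symm.trans (h2.2 p (Sym2.mem_mk_left _ _)))
      have hinc1 : ∀ u, incF H1 u = {e ∈ incF H' u | e ∈ F1} := by
        intro u
        ext e
        rw [mem_incF, Finset.mem_filter, mem_incF, hE1]
        constructor
        · rintro ⟨he, hu⟩
          exact ⟨⟨((hmemF1 e).mp he).1, hu⟩, he⟩
        · rintro ⟨⟨_, hu⟩, he⟩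
          exact ⟨he, hu⟩
      have hinc2 : ∀ u, incF H2 u = {e ∈ incF H' u | e ∈ F2} := by
        intro u
        ext e
        rw [mem_incF, Finset.mem_filter, mem_incF, hE2]
        constructor
        · rintro ⟨he, hu⟩
          exact ⟨⟨((hmemF2 e).mp he).1, hu⟩, he⟩
        · rintro ⟨⟨_, hu⟩, he⟩
          exact ⟨he, hu⟩
      have hincsplit : ∀ u, incF H' u = incF H1 u ∪ incF H2 u := by
        intro u
        rw [hinc1, hinc2, ← Finset.filter_or]
        refine (Finset.filter_true_of_mem fun e he => ?_).symm
        exact hsplit e (mem_incF.mp he).1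
      have hdisj : ∀ u, Disjoint (incF H1 u) (incF H2 u) := by
        intro u
        rw [Finset.disjoint_left]
        intro e h1 h2
        rw [hinc1, Finset.mem_filter] at h1
        rw [hinc2, Finset.mem_filter] at h2
        exact hF12 e h1.2 h2.2
      have hcard1 : H1.edgeSet.ncard ≤ n := by
        refine le_trans (Set.ncard_le_ncard ?_ (Set.toFinite _)) hcard'
        rw [hE1]; exact fun e he => ((hmemF1 e).mp he).1
      have hcard2 : H2.edgeSet.ncard ≤ n := by
        refine le_trans (Set.ncard_le_ncard ?_ (Set.toFinite _)) hcard'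
        rw [hE2]; exact fun e he => ((hmemF2 e).mp he).1
      have hconn1 : ∀ a b : V, (incF H1 a).Nonempty → (incF H1 b).Nonempty → H1.Reachable a b := by
        rw [hH1, hF1]; exact fun a b => comp_conn a b
      have hconn2 : ∀ a b : V, (incF H2 a).Nonempty → (incF H2 b).Nonempty → H2.Reachable a b := by
        rw [hH2, hF2]; exact fun a b => comp_conn a b
      have hhv1 : H1.edgeSet.Nonempty → (incF H1 v).Nonempty := by
        rw [hH1, hF1]; exact fun h => comp_hv h
      have hhv2 : H2.edgeSet.Nonempty → (incF H2 w).Nonempty := by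
        rw [hH2, hF2]; exact fun h => comp_hv h
      obtain ⟨χ₁, h11, h12⟩ := ih H1 hcard1 hconn1 v hhv1
      obtain ⟨χ₂, h21, h22⟩ := ih H2 hcard2 hconn2 w hhv2
      set s1 := Sgn H1 χ₁ v with hs1
      set σ : ℤ := if s1 ≤ 0 then 1 else -1 with hσ
      set b₀ : Bool := decide (s1 ≤ 0) with hb₀
      set χ₂' : Sym2 V → Bool :=
        if σ * Sgn H2 χ₂ w ≤ 0 then χ₂ else (fun e => !(χ₂ e)) with hχ₂'
      have hflipabs : ∀ u, |Sgn H2 χ₂' u| = |Sgn H2 χ₂ u| := by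
        intro u
        rw [hχ₂']
        split_ifs with h
        · rfl
        · rw [Sgn_neg, abs_neg]
      have hflipsign : σ * Sgn H2 χ₂' w ≤ 0 := by
        rw [hχ₂']
        split_ifs with h
        · exact h
        · rw [Sgn_neg]
          nlinarith [le_of_not_ge h]
      set χ : Sym2 V → Bool := fun e => if e ∈ F1 then χ₁ e else if e ∈ F2 then χ₂' e else b₀
        with hχ
      have hvwH' : s(v,w) ∉ H'.edgeSet := by
        rw [hH', SimpleGraph.edgeSet_deleteEdges]; simp
      have hnotF1 : s(v,w) ∉ F1 := fun h => hvwH' ((hmemF1 _).mp h).1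
      have hnotF2 : s(v,w) ∉ F2 := fun h => hvwH' ((hmemF2 _).mp h).1
      have hSgn : ∀ u, Sgn H χ u
          = Sgn H1 χ₁ u + Sgn H2 χ₂' u + (if u = v ∨ u = w then σ else 0) := by
        intro u
        rw [Sgn_deleteEdge he₀.1 χ u, ← hH']
        have e1 : Sgn H' χ u = Sgn H1 χ u + Sgn H2 χ u := Sgn_split (hincsplit u) (hdisj u) χ
        have e2 : Sgn H1 χ u = Sgn H1 χ₁ u := by
          refine Sgn_congr rfl fun e he => ?_
          rw [hinc1, Finset.mem_filter] at he
          simp only [hχ, if_pos he.2]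
        have e3 : Sgn H2 χ u = Sgn H2 χ₂' u := by
          refine Sgn_congr rfl fun e he => ?_
          rw [hinc2, Finset.mem_filter] at he
          have hn : e ∉ F1 := fun h => hF12 e h he.2
          simp only [hχ, if_neg hn, if_pos he.2]
        have e4 : (if χ s(v,w) then (1:ℤ) else -1) = σ := by
          have hb : χ s(v,w) = b₀ := by
            simp only [hχ, if_neg hnotF1, if_neg hnotF2]
          rw [hb, hb₀, hσ]
          by_cases h : s1 ≤ 0 <;> simp [h]
        rw [e1, e2, e3, e4]
      have hS2v : Sgn H2 χ₂' v = 0 := by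
        refine Sgn_of_incF_empty ?_ _
        rw [hH2, hF2]
        exact incF_comp_of_not_reach hr
      have hS1w : Sgn H1 χ₁ w = 0 := by
        refine Sgn_of_incF_empty ?_ _
        rw [hH1, hF1]
        exact incF_comp_of_not_reach (fun h => hr h.symm)
      refine ⟨χ, ?_, ?_⟩
      · intro u hu
        rw [hSgn u]
        by_cases huw : u = w
        · subst huw
          rw [hS1w, if_pos (Or.inr rfl), zero_add]
          have h22' : |Sgn H2 χ₂' u| ≤ 2 := by rw [hflipabs u]; exact h22
          have := hflipsign
          rw [abs_le] at h22' ⊢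
          rw [hσ] at this ⊢
          by_cases h : s1 ≤ 0 <;> simp [h] at this ⊢ <;> omega
        · rw [if_neg (by tauto), add_zero]
          by_cases hu1 : H'.Reachable u v
          · have hnu2 : ¬ H'.Reachable u w := fun h => hr (hu1.symm.trans h)
            have : Sgn H2 χ₂' u = 0 := by
              refine Sgn_of_incF_empty ?_ _
              rw [hH2, hF2]
              exact incF_comp_of_not_reach hnu2
            rw [this, add_zero]
            exact h11 u hu
          · have : Sgn H1 χ₁ u = 0 := by
              refine Sgn_of_incF_empty ?_ _
              rw [hH1, hF1]
              exact incF_comp_of_not_reach hu1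
            rw [this, zero_add]
            by_cases hu2 : H'.Reachable u w
            · have h' : |Sgn H2 χ₂' u| ≤ 1 := by rw [hflipabs u]; exact h21 u huw
              exact h'
            · have : Sgn H2 χ₂' u = 0 := by
                refine Sgn_of_incF_empty ?_ _
                rw [hH2, hF2]
                exact incF_comp_of_not_reach hu2
              rw [this]
              simp
      · rw [hSgn v, hS2v, add_zero, if_pos (Or.inl rfl)]
        rw [abs_le] at h12 ⊢
        rw [hσ, ← hs1]
        rw [hs1] at h12
        by_cases h : s1 ≤ 0 <;> simp [h] <;> omega

lemma Sgn_eq_counts (H : SimpleGraph V) (χ : Sym2 V → Bool) (u : V) :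
    Sgn H χ u = (((incF H u).filter (fun e => χ e = true)).card : ℤ)
      - ((incF H u).filter (fun e => χ e = false)).card := by
  unfold Sgn
  rw [← Finset.sum_filter_add_sum_filter_not (incF H u) (fun e => χ e = true)]
  have h1 : ∑ e ∈ (incF H u).filter (fun e => χ e = true), (if χ e then (1:ℤ) else -1)
      = (((incF H u).filter (fun e => χ e = true)).card : ℤ) := by
    rw [Finset.sum_congr rfl (fun e he => if_pos (Finset.mem_filter.mp he).2),
      Finset.sum_const, nsmul_eq_mul, mul_one]
  have hfc : (incF H u).filter (fun e => ¬ (χ e = true))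
      = (incF H u).filter (fun e => χ e = false) := by
    apply Finset.filter_congr
    intro e _
    simp [Bool.not_eq_true]
  have h2 : ∑ e ∈ (incF H u).filter (fun e => ¬(χ e = true)), (if χ e then (1:ℤ) else -1)
      = -(((incF H u).filter (fun e => χ e = false)).card : ℤ) := by
    rw [hfc, Finset.sum_congr rfl (fun e he => if_neg (by
      have := (Finset.mem_filter.mp he).2; simp [this])),
      Finset.sum_const, nsmul_eq_mul, mul_neg_one]
  rw [h1, h2]
  ring

lemma filter_bool_card (s : Finset (Sym2 V)) (χ : Sym2 V → Bool) :
    (s.filter (fun e => χ e = true)).card + (s.filter (fun e => χ e = false)).card = s.card := by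
  have h : (s.filter (fun e => χ e = false)) = s.filter (fun e => ¬ (χ e = true)) := by
    apply Finset.filter_congr
    intro e _
    simp [Bool.not_eq_true]
  rw [h]
  simpa using Finset.card_filter_add_card_filter_not (s := s) (p := fun e => χ e = true)

variable {k : ℕ}

/-- Number of edges of colour `i` at `v`. -/
noncomputable def cnt (G : SimpleGraph V) (c : Sym2 V → Fin k) (i : Fin k) (v : V) : ℕ :=
  ((incF G v).filter (fun e => c e = i)).card

/-- Sum-of-squares potential. -/
noncomputable def Phi (G : SimpleGraph V) (c : Sym2 V → Fin k) : ℕ :=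
  ∑ v : V, ∑ i : Fin k, (cnt G c i v)^2

lemma sq_helper1 {S d : ℤ} (h : |S| ≤ 1) (hd : d ≠ 0) : S^2 ≤ d^2 := by
  rw [abs_le] at h
  rcases hd.lt_or_gt with h' | h' <;> nlinarith

lemma sq_helper2 {S d : ℤ} (h : |S| ≤ 2) (hd : 3 ≤ d) : S^2 < d^2 := by
  rw [abs_le] at h
  nlinarith

lemma exists_balanced (G : SimpleGraph V) (hk : 0 < k) :
    ∃ c : Sym2 V → Fin k, ∀ (v : V) (i j : Fin k), cnt G c i v ≤ cnt G c j v + 2 := by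
  classical
  have hne : Nonempty (Fin k) := ⟨⟨0, hk⟩⟩
  obtain ⟨c, hc⟩ := Finite.exists_min (fun c : Sym2 V → Fin k => Phi G c)
  refine ⟨c, ?_⟩
  by_contra hcon
  push_neg at hcon
  obtain ⟨v, a, b, hab⟩ := hcon
  -- so cnt G c b v + 2 < cnt G c a v
  have hane : a ≠ b := by rintro rfl; omega
  set AB : Set (Sym2 V) := {e | e ∈ G.edgeSet ∧ (c e = a ∨ c e = b)} with hAB
  set H : SimpleGraph V := SimpleGraph.fromEdgeSet AB with hH
  have hEH : H.edgeSet = AB := by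
    rw [hH, SimpleGraph.edgeSet_fromEdgeSet]
    ext e
    simp only [Set.mem_diff, Set.mem_setOf_eq, and_iff_left_iff_imp]
    rintro ⟨he, _⟩
    exact fun hd => (G.not_isDiag_of_mem_edgeSet he) hd
  have hHinc : ∀ u, incF H u = (incF G u).filter (fun e => c e = a ∨ c e = b) := by
    intro u
    ext e
    rw [mem_incF, Finset.mem_filter, mem_incF, hEH]
    constructor
    · rintro ⟨⟨he, hcol⟩, hu⟩
      exact ⟨⟨he, hu⟩, hcol⟩
    · rintro ⟨⟨he, hu⟩, hcol⟩
      exact ⟨⟨he, hcol⟩, hu⟩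
  set CE : Set (Sym2 V) := compEdges H v with hCE
  set HC : SimpleGraph V := SimpleGraph.fromEdgeSet CE with hHC
  have hEHC : HC.edgeSet = CE := by rw [hHC, hCE]; exact edgeSet_comp H v
  have hCEsub : ∀ e, e ∈ CE → e ∈ H.edgeSet := by
    intro e he; rw [hCE] at he; exact he.1
  obtain ⟨χ, hχ1, hχ2⟩ := key (HC.edgeSet.ncard) HC le_rfl
    (by rw [hHC, hCE]; exact fun x y => comp_conn x y) v (by rw [hHC, hCE]; exact comp_hv)
  set c' : Sym2 V → Fin k := fun e => if e ∈ CE then (if χ e then a else b) else c e with hc'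
  -- incidence identities
  have hHCinc_reach : ∀ u, H.Reachable u v → incF HC u = incF H u := by
    intro u h; rw [hHC, hCE]; exact incF_comp_of_reach h
  have hHCinc_not : ∀ u, ¬ H.Reachable u v → incF HC u = ∅ := by
    intro u h; rw [hHC, hCE]; exact incF_comp_of_not_reach h
  have hmemCE : ∀ e u, e ∈ incF HC u → e ∈ CE := by
    intro e u he; rw [mem_incF, hEHC] at he; exact he.1
  -- for u not reaching v nothing changes
  have hsame : ∀ u, ¬ H.Reachable u v → ∀ i, cnt G c' i u = cnt G c i u := by
    intro u hu i
    unfold cnt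
    congr 1
    apply Finset.filter_congr
    intro e he
    have : e ∉ CE := by
      intro hce
      refine hu ?_
      rw [hCE] at hce
      exact hce.2 u (mem_incF.mp he).2
    rw [hc']
    simp [this]
  -- colours other than a,b never change
  have hother : ∀ u i, i ≠ a → i ≠ b → cnt G c' i u = cnt G c i u := by
    intro u i hia hib
    unfold cnt
    congr 1
    apply Finset.filter_congr
    intro e _
    rw [hc']
    by_cases hce : e ∈ CE
    · have hcab : c e = a ∨ c e = b := ((hEH ▸ hCEsub e hce).2)
      simp only [if_pos hce]
      have h1 : (if χ e then a else b) ≠ i := by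
        by_cases hχe : χ e <;> simp [hχe] <;> [exact hia.symm; exact hib.symm]
      have h2 : ¬ (c e = i) := by
        rcases hcab with h' | h' <;> rw [h'] <;> [exact hia.symm; exact hib.symm]
      simp [h1, h2]
    · simp [hce]
  -- key filter identities at vertices in the component of v
  have hfila : ∀ u, H.Reachable u v → (incF G u).filter (fun e => c' e = a)
      = (incF HC u).filter (fun e => χ e = true) := by
    intro u hu
    ext e
    rw [Finset.mem_filter, Finset.mem_filter, hHCinc_reach u hu, hHinc, Finset.mem_filter]
    constructor
    · rintro ⟨heG, hca⟩
      simp only [hc'] at hca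
      by_cases hce : e ∈ CE
      · rw [if_pos hce] at hca
        have hcab : c e = a ∨ c e = b := (hEH ▸ hCEsub e hce).2
        by_cases hχe : χ e = true
        · exact ⟨⟨heG, hcab⟩, hχe⟩
        · rw [if_neg (by simp [hχe])] at hca
          exact absurd hca.symm hane
      · rw [if_neg hce] at hca
        exfalso
        apply hce
        refine hmemCE e u ?_
        rw [hHCinc_reach u hu, hHinc, Finset.mem_filter]
        exact ⟨heG, Or.inl hca⟩
    · rintro ⟨⟨heG, hcab⟩, hχe⟩
      have hce : e ∈ CE := by
        refine hmemCE e u ?_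
        rw [hHCinc_reach u hu, hHinc, Finset.mem_filter]
        exact ⟨heG, hcab⟩
      refine ⟨heG, ?_⟩
      simp only [hc']
      rw [if_pos hce, if_pos (by simp [hχe])]
  have hfilb : ∀ u, H.Reachable u v → (incF G u).filter (fun e => c' e = b)
      = (incF HC u).filter (fun e => χ e = false) := by
    intro u hu
    ext e
    rw [Finset.mem_filter, Finset.mem_filter, hHCinc_reach u hu, hHinc, Finset.mem_filter]
    constructor
    · rintro ⟨heG, hca⟩
      simp only [hc'] at hca
      by_cases hce : e ∈ CE
      · rw [if_pos hce] at hca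
        have hcab : c e = a ∨ c e = b := (hEH ▸ hCEsub e hce).2
        by_cases hχe : χ e = true
        · rw [if_pos (by simp [hχe])] at hca
          exact absurd hca hane
        · exact ⟨⟨heG, hcab⟩, by simp [Bool.not_eq_true] at hχe; exact hχe⟩
      · rw [if_neg hce] at hca
        exfalso
        apply hce
        refine hmemCE e u ?_
        rw [hHCinc_reach u hu, hHinc, Finset.mem_filter]
        exact ⟨heG, Or.inr hca⟩
    · rintro ⟨⟨heG, hcab⟩, hχe⟩
      have hce : e ∈ CE := by
        refine hmemCE e u ?_
        rw [hHCinc_reach u hu, hHinc, Finset.mem_filter]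
        exact ⟨heG, hcab⟩
      refine ⟨heG, ?_⟩
      simp only [hc']
      rw [if_pos hce, if_neg (by simp [hχe])]
  have holda : ∀ u, H.Reachable u v → (incF G u).filter (fun e => c e = a)
      = (incF HC u).filter (fun e => c e = a) := by
    intro u hu
    ext e
    rw [Finset.mem_filter, Finset.mem_filter, hHCinc_reach u hu, hHinc, Finset.mem_filter]
    tauto
  have holdb : ∀ u, H.Reachable u v → (incF G u).filter (fun e => c e = b)
      = (incF HC u).filter (fun e => c e = b) := by
    intro u hu
    ext e
    rw [Finset.mem_filter, Finset.mem_filter, hHCinc_reach u hu, hHinc, Finset.mem_filter]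
    tauto
  have hcnt'sum : ∀ u, H.Reachable u v →
      cnt G c' a u + cnt G c' b u = (incF HC u).card := by
    intro u hu
    unfold cnt
    rw [hfila u hu, hfilb u hu]
    exact filter_bool_card _ χ
  have hcntsum : ∀ u, H.Reachable u v →
      cnt G c a u + cnt G c b u = (incF HC u).card := by
    intro u hu
    unfold cnt
    rw [holda u hu, holdb u hu]
    have heq : (incF HC u).filter (fun e => c e = b)
        = (incF HC u).filter (fun e => ¬ (c e = a)) := by
      apply Finset.filter_congr
      intro e he
      have hcab : c e = a ∨ c e = b := (hEH ▸ hCEsub e (hmemCE e u he)).2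
      constructor
      · intro h hA; exact hane (hA.symm.trans h)
      · intro h; tauto
    rw [heq]
    exact Finset.card_filter_add_card_filter_not (p := fun e => c e = a)
  have hSgnu : ∀ u, H.Reachable u v →
      Sgn HC χ u = (cnt G c' a u : ℤ) - cnt G c' b u := by
    intro u hu
    rw [Sgn_eq_counts]
    unfold cnt
    rw [hfila u hu, hfilb u hu]
  -- the per-vertex comparison
  have hcompare : ∀ u, ((cnt G c' a u)^2 + (cnt G c' b u)^2 ≤ (cnt G c a u)^2 + (cnt G c b u)^2)
      ∧ (u = v → (cnt G c' a u)^2 + (cnt G c' b u)^2 < (cnt G c a u)^2 + (cnt G c b u)^2) := by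
    intro u
    by_cases hu : H.Reachable u v
    · have h1 := hcnt'sum u hu
      have h2 := hcntsum u hu
      have h3 := hSgnu u hu
      have hpar := even_Sgn_add_card HC χ u
      set S := Sgn HC χ u with hSdef
      set m : ℤ := ((incF HC u).card : ℤ) with hm
      set xa : ℤ := (cnt G c a u : ℤ) with hxa
      set xb : ℤ := (cnt G c b u : ℤ) with hxb
      set ya : ℤ := (cnt G c' a u : ℤ) with hya
      set yb : ℤ := (cnt G c' b u : ℤ) with hyb
      have h1' : ya + yb = m := by rw [hya, hyb, hm]; exact_mod_cast h1
      have h2' : xa + xb = m := by rw [hxa, hxb, hm]; exact_mod_cast h2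
      have hparS : ∃ t : ℤ, S + m = t + t := hpar
      obtain ⟨t, ht⟩ := hparS
      have hS2 : (u ≠ v → S^2 ≤ (xa - xb)^2) ∧ (u = v → S^2 < (xa - xb)^2) := by
        constructor
        · intro huv
          have habs : |S| ≤ 1 := hχ1 u huv
          by_cases hs0 : xa = xb
          · have hS0 : S = 0 := by
              have hmeven : S = 2*(t - xa) := by omega
              rw [abs_le] at habs
              omega
            rw [hS0, hs0]
            positivity
          · exact sq_helper1 habs (fun h => hs0 (by omega))
        · intro huv
          subst huv
          have hge : 3 ≤ xa - xb := by
            rw [hxa, hxb]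
            have := hab
            push_cast
            omega
          exact sq_helper2 hχ2 hge
      have hiden : ∀ x y : ℤ, 2*(x^2 + y^2) = (x+y)^2 + (x-y)^2 := by intro x y; ring
      have hy : 2*(ya^2 + yb^2) = m^2 + S^2 := by rw [hiden, h1', ← h3]
      have hx : 2*(xa^2 + xb^2) = m^2 + (xa - xb)^2 := by rw [hiden, h2']
      have hfin : ∀ hZ : ya^2 + yb^2 ≤ xa^2 + xb^2,
          (cnt G c' a u)^2 + (cnt G c' b u)^2 ≤ (cnt G c a u)^2 + (cnt G c b u)^2 := by
        intro hZ
        rw [hya, hyb, hxa, hxb] at hZ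
        exact_mod_cast hZ
      have hfinlt : ∀ hZ : ya^2 + yb^2 < xa^2 + xb^2,
          (cnt G c' a u)^2 + (cnt G c' b u)^2 < (cnt G c a u)^2 + (cnt G c b u)^2 := by
        intro hZ
        rw [hya, hyb, hxa, hxb] at hZ
        exact_mod_cast hZ
      constructor
      · by_cases huv : u = v
        · exact hfin (by have := hS2.2 huv; linarith)
        · exact hfin (by have := hS2.1 huv; linarith)
      · intro huv
        exact hfinlt (by have := hS2.2 huv; linarith)
    · constructor
      · rw [hsame u hu a, hsame u hu b]
      · intro huv
        subst huv
        exact absurd (Reachable.refl _) hu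
  -- sum decomposition over colours
  have hbmem : b ∈ (Finset.univ : Finset (Fin k)).erase a := Finset.mem_erase.mpr ⟨hane.symm, Finset.mem_univ b⟩
  have hdecomp : ∀ (d : Sym2 V → Fin k) (u : V), ∑ i : Fin k, (cnt G d i u)^2
      = (∑ i ∈ ((Finset.univ : Finset (Fin k)).erase a).erase b, (cnt G d i u)^2)
        + (cnt G d b u)^2 + (cnt G d a u)^2 := by
    intro d u
    rw [Finset.sum_erase_add _ _ hbmem, Finset.sum_erase_add _ _ (Finset.mem_univ a)]
  have hrest : ∀ u, ∑ i ∈ ((Finset.univ : Finset (Fin k)).erase a).erase b, (cnt G c' i u)^2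
      = ∑ i ∈ ((Finset.univ : Finset (Fin k)).erase a).erase b, (cnt G c i u)^2 := by
    intro u
    refine Finset.sum_congr rfl fun i hi => ?_
    rw [Finset.mem_erase, Finset.mem_erase] at hi
    rw [hother u i hi.2.1 hi.1]
  have hPhi : Phi G c' < Phi G c := by
    unfold Phi
    refine Finset.sum_lt_sum (fun u _ => ?_) ⟨v, Finset.mem_univ v, ?_⟩
    · rw [hdecomp c' u, hdecomp c u, hrest u]
      have := (hcompare u).1
      omega
    · rw [hdecomp c' v, hdecomp c v, hrest v]
      have := (hcompare v).2 rfl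
      omega
  exact absurd (hc c') (not_le.mpr hPhi)

lemma deg_eq (H : SimpleGraph V) (v : V) : (H.neighborSet v).ncard = (incF H v).card := by
  classical
  have h1 : (H.neighborSet v).ncard = Nat.card (H.neighborSet v) :=
    (Nat.card_coe_set_eq _).symm
  have h2 : Nat.card (H.neighborSet v) = Nat.card (H.incidenceSet v) :=
    Nat.card_congr (H.incidenceSetEquivNeighborSet v).symm
  have h3 : Nat.card (H.incidenceSet v) = (H.incidenceSet v).ncard :=
    Nat.card_coe_set_eq _
  rw [h1, h2, h3, incF]
  convert Set.ncard_eq_toFinset_card' (H.incidenceSet v)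


end Aux

theorem stmt11 {V : Type*} [Fintype V] (G : SimpleGraph V) (k : ℕ) (hk : 0 < k) :
    ∃ Gi : Fin k → SimpleGraph V, (∀ i, Gi i ≤ G) ∧
      (∀ i j, i ≠ j → Disjoint (Gi i).edgeSet (Gi j).edgeSet) ∧
      (⋃ i, (Gi i).edgeSet) = G.edgeSet ∧
      ∀ (v : V) (i : Fin k),
        ((G.neighborSet v).ncard : ℝ) / k - 2 ≤ (((Gi i).neighborSet v).ncard : ℝ) ∧
        (((Gi i).neighborSet v).ncard : ℝ) ≤ ((G.neighborSet v).ncard : ℝ) / k + 2 := by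
  classical
  obtain ⟨c, hbal⟩ := exists_balanced G hk
  set Gi : Fin k → SimpleGraph V :=
    fun i => SimpleGraph.fromEdgeSet {e | e ∈ G.edgeSet ∧ c e = i} with hGi
  have hEi : ∀ i, (Gi i).edgeSet = {e | e ∈ G.edgeSet ∧ c e = i} := by
    intro i
    rw [hGi, SimpleGraph.edgeSet_fromEdgeSet]
    ext e
    simp only [Set.mem_diff, Set.mem_setOf_eq, and_iff_left_iff_imp]
    rintro ⟨he, _⟩
    exact fun hd => (G.not_isDiag_of_mem_edgeSet he) hd
  have hle : ∀ i, Gi i ≤ G := by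
    intro i x y hxy
    rw [hGi, SimpleGraph.fromEdgeSet_adj] at hxy
    exact (G.mem_edgeSet).mp hxy.1.1
  have hdisj : ∀ i j, i ≠ j → Disjoint (Gi i).edgeSet (Gi j).edgeSet := by
    intro i j hij
    rw [Set.disjoint_left]
    intro e hei hej
    rw [hEi i] at hei
    rw [hEi j] at hej
    exact hij (hei.2.symm.trans hej.2)
  have hunion : (⋃ i, (Gi i).edgeSet) = G.edgeSet := by
    ext e
    simp only [Set.mem_iUnion]
    constructor
    · rintro ⟨i, hei⟩
      exact ((hEi i) ▸ hei).1
    · intro he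
      exact ⟨c e, by rw [hEi]; exact ⟨he, rfl⟩⟩
  have hincGi : ∀ i v, incF (Gi i) v = (incF G v).filter (fun e => c e = i) := by
    intro i v
    ext e
    rw [mem_incF, Finset.mem_filter, mem_incF, hEi i]
    constructor
    · rintro ⟨⟨he, hc⟩, hv⟩
      exact ⟨⟨he, hv⟩, hc⟩
    · rintro ⟨⟨he, hv⟩, hc⟩
      exact ⟨⟨he, hc⟩, hv⟩
  have hdeg : ∀ i v, ((Gi i).neighborSet v).ncard = cnt G c i v := by
    intro i v
    rw [deg_eq, hincGi, cnt]
  have hdegG : ∀ v, (G.neighborSet v).ncard = (incF G v).card := fun v => deg_eq G v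
  refine ⟨Gi, hle, hdisj, hunion, ?_⟩
  intro v i
  have hsum : ∑ j : Fin k, cnt G c j v = (incF G v).card := by
    exact (Finset.card_eq_sum_card_fiberwise (fun e _ => Finset.mem_univ (c e))).symm
  set d : ℕ := (incF G v).card with hd
  set ni : ℕ := cnt G c i v with hni
  have hup : k * ni ≤ d + 2*k := by
    have : ∑ j : Fin k, ni ≤ ∑ j : Fin k, (cnt G c j v + 2) :=
      Finset.sum_le_sum fun j _ => hbal v i j
    rw [Finset.sum_const, Finset.card_univ, Fintype.card_fin, smul_eq_mul] at this
    rw [Finset.sum_add_distrib, hsum, Finset.sum_const, Finset.card_univ, Fintype.card_fin,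
      smul_eq_mul] at this
    omega
  have hlo : d ≤ k * ni + 2*k := by
    have : ∑ j : Fin k, cnt G c j v ≤ ∑ j : Fin k, (ni + 2) :=
      Finset.sum_le_sum fun j _ => hbal v j i
    rw [hsum, Finset.sum_const, Finset.card_univ, Fintype.card_fin, smul_eq_mul,
      Nat.mul_add] at this
    omega
  have hkR : (0:ℝ) < k := by exact_mod_cast hk
  have hupR : (k:ℝ) * ni ≤ d + 2*k := by exact_mod_cast hup
  have hloR : (d:ℝ) ≤ k * ni + 2*k := by exact_mod_cast hlo
  rw [hdeg i v, ← hni, hdegG v, ← hd]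
  constructor
  · rw [div_sub' (ne_of_gt hkR), div_le_iff₀ hkR]
    ring_nf
    ring_nf at hloR
    linarith
  · rw [div_add' _ _ _ (ne_of_gt hkR), le_div_iff₀ hkR]
    ring_nf
    ring_nf at hupR
    linarith
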